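/- (Exponential smoothing certificate) Fix λ > 0 and let ε₀ have m i.i.d. coordinates distributed Exp(rate λ) on ℝ_{≥0}^m, and let ε₁ = α + ε₀ for α ∈ ℝ_{≥0}^m. Let h : X → [0,1]^C be measurable, φ a transform, g^ε(x) = E[h(φ(x,ε))], and suppose g^{ε₀}(x)_{k_A} ≥ p_A ≥ p_B ≥ max_{k ≠ k_A} g^{ε₀}(x)_k. If ‖α‖₁ < −log(1 − p_A + p_B)/λ, then g^{ε₁}(x)_{k_A} > max_{k ≠ k_A} g^{ε₁}(x)_k. -/

import Mathlib

open MeasureTheory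

/-- The exponential distribution with rate `lam`, as a measure on `ℝ`. -/
noncomputable def expMeas (lam : ℝ) : Measure ℝ :=
  volume.withDensity fun z =>
    ENNReal.ofReal (if 0 ≤ z then lam * Real.exp (-(lam * z)) else 0)

theorem lintegral_fin_prod {n : ℕ} (μ : Fin n → Measure ℝ) [∀ i, SigmaFinite (μ i)]
    (f : Fin n → ℝ → ENNReal) (hf : ∀ i, Measurable (f i)) :
    ∫⁻ x : Fin n → ℝ, ∏ i, f i (x i) ∂(Measure.pi μ) = ∏ i, ∫⁻ x, f i x ∂(μ i) := by
  induction n with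
  | zero => simp
  | succ n ih =>
    have hmp : Measurable fun x : Fin (n+1) → ℝ => ∏ i, f i (x i) :=
      Finset.measurable_prod _ fun i _ => (hf i).comp (measurable_pi_apply i)
    rw [← (MeasurePreserving.symm _ (measurePreserving_piFinSuccAbove μ 0)).lintegral_comp hmp]
    simp_rw [MeasurableEquiv.piFinSuccAbove_symm_apply, Fin.insertNthEquiv,
      Fin.prod_univ_succ, Fin.insertNth_zero, Equiv.coe_fn_mk, Fin.cons_succ, Fin.cons_zero,
      Fin.zero_succAbove, cast_eq]
    have hg : Measurable fun y : Fin n → ℝ => ∏ x : Fin n, f x.succ (y x) :=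
      Finset.measurable_prod _ fun i _ => (hf _).comp (measurable_pi_apply i)
    rw [lintegral_prod_mul (hf 0).aemeasurable hg.aemeasurable]
    rw [ih (fun i => μ (Fin.succ i)) (fun i => f (Fin.succ i)) (fun i => hf _)]

theorem expMeas_eq (lam : ℝ) : expMeas lam = ProbabilityTheory.expMeasure lam := by
  show _ = volume.withDensity (ProbabilityTheory.gammaPDF 1 lam)
  unfold expMeas
  congr 1
  funext z
  exact (ProbabilityTheory.exponentialPDF_eq lam z).symm

theorem expMeas_Ici {lam : ℝ} (hlam : 0 < lam) {a : ℝ} (ha : 0 ≤ a) :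
    expMeas lam (Set.Ici a) = ENNReal.ofReal (Real.exp (-(lam * a))) := by
  haveI : IsProbabilityMeasure (expMeas lam) :=
    (expMeas_eq lam) ▸ ProbabilityTheory.isProbabilityMeasure_expMeasure hlam
  have hsing : expMeas lam {a} = 0 := by
    rw [expMeas]
    exact (withDensity_absolutelyContinuous volume _) (Real.volume_singleton)
  have hIio : expMeas lam (Set.Iio a) = expMeas lam (Set.Iic a) := by
    refine le_antisymm (measure_mono Set.Iio_subset_Iic_self) ?_
    calc expMeas lam (Set.Iic a) = expMeas lam (Set.Iio a ∪ {a}) := by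
          rw [Set.Iio_union_right]
      _ ≤ expMeas lam (Set.Iio a) + expMeas lam {a} := measure_union_le _ _
      _ = expMeas lam (Set.Iio a) := by rw [hsing, add_zero]
  have hIic : expMeas lam (Set.Iic a) = ENNReal.ofReal (1 - Real.exp (-(lam * a))) := by
    have hpdf : (fun z => ENNReal.ofReal (if 0 ≤ z then lam * Real.exp (-(lam * z)) else 0))
        = ProbabilityTheory.exponentialPDF lam :=
      funext fun z => (ProbabilityTheory.exponentialPDF_eq lam z).symm
    rw [expMeas, hpdf, withDensity_apply _ measurableSet_Iic,
      ProbabilityTheory.lintegral_exponentialPDF_eq_antiDeriv hlam a, if_pos ha]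
  have hcompl : expMeas lam (Set.Ici a) = 1 - expMeas lam (Set.Iio a) := by
    rw [← Set.compl_Iio, measure_compl measurableSet_Iio (measure_ne_top _ _), measure_univ]
  rw [hcompl, hIio, hIic]
  have hexple : Real.exp (-(lam * a)) ≤ 1 :=
    Real.exp_le_one_iff.mpr (by nlinarith)
  refine (ENNReal.eq_sub_of_add_eq ENNReal.ofReal_ne_top ?_).symm
  rw [← ENNReal.ofReal_add (Real.exp_pos _).le (by linarith)]
  norm_num

/-- exponential smoothing certificate. -/
theorem stmt_5 {X : Type*} [MeasurableSpace X] {m C : ℕ} (hC : 2 ≤ C)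
    (lam : ℝ) (hlam : 0 < lam)
    (h : X → Fin C → ℝ) (hhb : ∀ y k, h y k ∈ Set.Icc (0 : ℝ) 1)
    (φ : X → (Fin m → ℝ) → X) (x : X)
    (α : Fin m → ℝ) (hα : ∀ i, 0 ≤ α i)
    (P : Measure (Fin m → ℝ))
    (hP : P = Measure.pi fun _ : Fin m => expMeas lam)
    (hmeas : ∀ k, Measurable fun z : Fin m → ℝ => h (φ x z) k)
    (g₀ g₁ : Fin C → ℝ)
    (hg₀ : g₀ = fun k => ∫ z, h (φ x z) k ∂P)
    (hg₁ : g₁ = fun k => ∫ z, h (φ x (α + z)) k ∂P)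
    (kA : Fin C) (pA pB : ℝ)
    (hpB0 : 0 ≤ pB) (hpA1 : pA ≤ 1) (hAB : pB ≤ pA)
    (hconfA : pA ≤ g₀ kA) (hconfB : ∀ k, k ≠ kA → g₀ k ≤ pB)
    (hrad : ∑ i, |α i| < -Real.log (1 - pA + pB) / lam) :
    ∀ k, k ≠ kA → g₁ k < g₁ kA := by
  intro k hk
  -- Real-number preliminaries
  set A := ∑ i, α i with hAdef
  have hA0 : 0 ≤ A := Finset.sum_nonneg fun i _ => hα i
  have hAabs : ∑ i, |α i| = A := Finset.sum_congr rfl fun i _ => abs_of_nonneg (hα i)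
  set t := 1 - pA + pB with htdef
  have ht0 : 0 ≤ t := by simp only [htdef]; linarith
  have htpos : 0 < t := by
    rcases ht0.lt_or_eq with h' | h'
    · exact h'
    · exfalso
      rw [← h', Real.log_zero, neg_zero, zero_div, hAabs] at hrad
      linarith
  set q := Real.exp (-(lam * A)) with hqdef
  have hqpos : 0 < q := Real.exp_pos _
  have hq1 : q ≤ 1 := Real.exp_le_one_iff.mpr (by nlinarith)
  have htq : t < q := by
    have h1 : A * lam < -Real.log t := by
      rw [hAabs, lt_div_iff₀ hlam] at hrad; exact hrad
    calc t = Real.exp (Real.log t) := (Real.exp_log htpos).symm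
      _ < q := Real.exp_lt_exp.mpr (by nlinarith)
  have hkey : pB < pA - (1 - q) := by simp only [htdef] at htq; linarith
  -- Probability measure instances
  haveI hprob1 : IsProbabilityMeasure (expMeas lam) :=
    (expMeas_eq lam) ▸ ProbabilityTheory.isProbabilityMeasure_expMeasure hlam
  haveI hprobP : IsProbabilityMeasure P := by
    rw [hP]; infer_instance
  -- density machinery
  set pdf : ℝ → ENNReal :=
    fun z => ENNReal.ofReal (if 0 ≤ z then lam * Real.exp (-(lam * z)) else 0) with hpdfdef
  have hpdfm : Measurable pdf := by
    have : pdf = ProbabilityTheory.exponentialPDF lam := by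
      funext z; rw [ProbabilityTheory.exponentialPDF_eq]
    rw [this]
    exact (ProbabilityTheory.measurable_exponentialPDFReal lam).ennreal_ofReal
  set D : (Fin m → ℝ) → ENNReal := fun w => ∏ i, pdf (w i) with hDdef
  have hD : Measurable D :=
    Finset.measurable_prod _ fun i _ => hpdfm.comp (measurable_pi_apply i)
  have hPD : P = (volume : Measure (Fin m → ℝ)).withDensity D := by
    rw [hP]
    refine Measure.pi_eq fun s hs => ?_
    rw [withDensity_apply _ (MeasurableSet.univ_pi hs),
      ← lintegral_indicator (MeasurableSet.univ_pi hs) D]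
    have hind : ∀ w : Fin m → ℝ,
        (Set.univ.pi s).indicator D w = ∏ i, (s i).indicator pdf (w i) := by
      intro w
      by_cases hw : w ∈ Set.univ.pi s
      · rw [Set.indicator_of_mem hw]
        exact Finset.prod_congr rfl fun i _ =>
          (Set.indicator_of_mem (hw i (Set.mem_univ i)) _).symm
      · rw [Set.indicator_of_notMem hw]
        have hex : ∃ i, w i ∉ s i := by
          by_contra hcon
          push_neg at hcon
          exact hw fun i _ => hcon i
        obtain ⟨i, hi⟩ := hex
        symm
        refine Finset.prod_eq_zero (Finset.mem_univ i) ?_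
        rw [Set.indicator_of_notMem hi]
    simp_rw [hind]
    rw [volume_pi, lintegral_fin_prod _ _ (fun i => hpdfm.indicator (hs i))]
    refine Finset.prod_congr rfl fun i _ => ?_
    rw [lintegral_indicator (hs i) pdf, ← withDensity_apply _ (hs i)]
    rfl
  have hrep : ∀ G : (Fin m → ℝ) → ENNReal, Measurable G →
      ∫⁻ z, G z ∂P = ∫⁻ w, D w * G w := by
    intro G hG
    rw [hPD, lintegral_withDensity_eq_lintegral_mul _ hD hG]
    rfl
  -- the shifted support set
  set S : Set (Fin m → ℝ) := {w | ∀ i, α i ≤ w i} with hSdef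
  have hSm : MeasurableSet S := by
    have : S = Set.univ.pi fun i => Set.Ici (α i) := by
      ext w; simp [hSdef, Set.mem_pi, Pi.le_def]
    rw [this]
    exact MeasurableSet.univ_pi fun i => measurableSet_Ici
  set E : (Fin m → ℝ) → ENNReal := S.indicator D with hEdef
  have hE : Measurable E := hD.indicator hSm
  set R := ENNReal.ofReal (Real.exp (lam * A)) with hRdef
  have hR0 : R ≠ 0 := by
    simp [hRdef, ENNReal.ofReal_eq_zero, not_le, Real.exp_pos]
  have hRtop : R ≠ ⊤ := ENNReal.ofReal_ne_top
  -- pointwise shift identity : D z = R * E (α + z)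
  have hptw : ∀ z : Fin m → ℝ, D z = R * E (α + z) := by
    intro z
    by_cases hz : (α + z) ∈ S
    · rw [hEdef, Set.indicator_of_mem hz]
      have hz' : ∀ i, 0 ≤ z i := fun i => by
        have := hz i; simp only [Pi.add_apply] at this; linarith
      have hfac : ∀ i : Fin m, pdf (z i)
          = ENNReal.ofReal (Real.exp (lam * α i)) * pdf ((α + z) i) := by
        intro i
        have h1 : (0:ℝ) ≤ z i := hz' i
        have h2 : (0:ℝ) ≤ α i + z i := by have := hα i; linarith
        simp only [hpdfdef, Pi.add_apply, if_pos h1, if_pos h2]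
        rw [← ENNReal.ofReal_mul (Real.exp_nonneg _)]
        congr 1
        rw [mul_left_comm, ← Real.exp_add]
        congr 2
        ring
      calc D z = ∏ i, (ENNReal.ofReal (Real.exp (lam * α i)) * pdf ((α + z) i)) :=
            Finset.prod_congr rfl fun i _ => hfac i
        _ = (∏ i, ENNReal.ofReal (Real.exp (lam * α i))) * ∏ i, pdf ((α + z) i) :=
            Finset.prod_mul_distrib
        _ = R * D (α + z) := by
            congr 1
            rw [hRdef, ← ENNReal.ofReal_prod_of_nonneg (fun i _ => Real.exp_nonneg _)]
            congr 1
            rw [← Real.exp_sum, hAdef, Finset.mul_sum]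
    · rw [hEdef, Set.indicator_of_notMem hz, mul_zero]
      have : ∃ i, ¬ α i ≤ α i + z i := by
        by_contra hcon
        push_neg at hcon
        exact hz fun i => by simpa using hcon i
      obtain ⟨i, hi⟩ := this
      have hzi : ¬ (0 ≤ z i) := fun hh => hi (by linarith)
      refine Finset.prod_eq_zero (Finset.mem_univ i) ?_
      simp [hpdfdef, hzi]
  -- measurability of integrands
  have hfm : ∀ k', Measurable fun z : Fin m → ℝ => ENNReal.ofReal (h (φ x z) k') :=
    fun k' => (hmeas k').ennreal_ofReal
  have haddm : Measurable fun z : Fin m → ℝ => α + z :=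
    measurable_const.add measurable_id
  have hfm' : ∀ k', Measurable fun z : Fin m → ℝ => ENNReal.ofReal (h (φ x (α + z)) k') :=
    fun k' => ((hmeas k').comp haddm).ennreal_ofReal
  -- lintegral representations of g₀ and g₁
  have hB0 : ∀ k', g₀ k' = (∫⁻ z, ENNReal.ofReal (h (φ x z) k') ∂P).toReal := by
    intro k'
    rw [hg₀]
    exact integral_eq_lintegral_of_nonneg_ae (Filter.Eventually.of_forall fun z => (hhb _ _).1)
      (hmeas k').aestronglyMeasurable
  have hB1 : ∀ k', g₁ k' = (∫⁻ z, ENNReal.ofReal (h (φ x (α + z)) k') ∂P).toReal := by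
    intro k'
    rw [hg₁]
    exact integral_eq_lintegral_of_nonneg_ae (Filter.Eventually.of_forall fun z => (hhb _ _).1)
      ((hmeas k').comp haddm).aestronglyMeasurable
  have hI0le1 : ∀ k', (∫⁻ z, ENNReal.ofReal (h (φ x z) k') ∂P) ≤ 1 := by
    intro k'
    calc (∫⁻ z, ENNReal.ofReal (h (φ x z) k') ∂P) ≤ ∫⁻ _, 1 ∂P :=
          lintegral_mono fun z => ENNReal.ofReal_le_one.mpr (hhb _ _).2
      _ = 1 := by simp
  have hI0top : ∀ k', (∫⁻ z, ENNReal.ofReal (h (φ x z) k') ∂P) ≠ ⊤ :=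
    fun k' => (lt_of_le_of_lt (hI0le1 k') ENNReal.one_lt_top).ne
  -- shift identity for the lintegrals
  have hshift : ∀ k', (∫⁻ z, ENNReal.ofReal (h (φ x (α + z)) k') ∂P)
      = R * ∫⁻ w, E w * ENNReal.ofReal (h (φ x w) k') := by
    intro k'
    rw [hrep _ (hfm' k')]
    calc ∫⁻ z, D z * ENNReal.ofReal (h (φ x (α + z)) k')
        = ∫⁻ z, (fun w => R * (E w * ENNReal.ofReal (h (φ x w) k'))) (α + z) := by
          refine lintegral_congr fun z => ?_
          simp only []
          rw [hptw z, mul_assoc]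
      _ = ∫⁻ w, R * (E w * ENNReal.ofReal (h (φ x w) k')) :=
          lintegral_add_left_eq_self
            (fun w => R * (E w * ENNReal.ofReal (h (φ x w) k'))) α
      _ = R * ∫⁻ w, E w * ENNReal.ofReal (h (φ x w) k') :=
          lintegral_const_mul R (hE.mul (hfm k'))
  -- total masses
  have hintD : ∫⁻ w, D w = 1 := by
    have hu := measure_univ (μ := P)
    rw [hPD, withDensity_apply _ MeasurableSet.univ, setLIntegral_univ] at hu
    exact hu
  have hintE : ∫⁻ w, E w = ENNReal.ofReal q := by
    have hSpi : S = Set.univ.pi fun i => Set.Ici (α i) := by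
      ext w; simp [hSdef, Set.mem_pi, Pi.le_def]
    rw [hEdef, lintegral_indicator hSm D, ← withDensity_apply _ hSm, ← hPD, hP, hSpi,
      Measure.pi_pi]
    calc (∏ i, expMeas lam (Set.Ici (α i)))
        = ∏ i, ENNReal.ofReal (Real.exp (-(lam * α i))) :=
          Finset.prod_congr rfl fun i _ => expMeas_Ici hlam (hα i)
      _ = ENNReal.ofReal q := by
          rw [← ENNReal.ofReal_prod_of_nonneg (fun i _ => Real.exp_nonneg _)]
          congr 1
          rw [← Real.exp_sum, hqdef, hAdef, Finset.mul_sum]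
          congr 1
          rw [← Finset.sum_neg_distrib]
  have hEleD : ∀ w, E w ≤ D w := fun w => Set.indicator_le_self S D w
  -- bounds on J
  have hJle1 : ∀ k', (∫⁻ w, E w * ENNReal.ofReal (h (φ x w) k')) ≤ 1 := by
    intro k'
    calc (∫⁻ w, E w * ENNReal.ofReal (h (φ x w) k')) ≤ ∫⁻ w, D w :=
          lintegral_mono fun w => by
            calc E w * ENNReal.ofReal (h (φ x w) k') ≤ D w * 1 :=
                  mul_le_mul' (hEleD w) (ENNReal.ofReal_le_one.mpr (hhb _ _).2)
              _ = D w := mul_one _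
      _ = 1 := hintD
  -- upper bound for k ≠ kA
  have hJk : (∫⁻ w, E w * ENNReal.ofReal (h (φ x w) k)) ≤ ENNReal.ofReal pB := by
    calc (∫⁻ w, E w * ENNReal.ofReal (h (φ x w) k))
        ≤ ∫⁻ w, D w * ENNReal.ofReal (h (φ x w) k) :=
          lintegral_mono fun w => mul_le_mul_left (hEleD w) _
      _ = ∫⁻ z, ENNReal.ofReal (h (φ x z) k) ∂P := (hrep _ (hfm k)).symm
      _ ≤ ENNReal.ofReal pB := by
          rw [← ENNReal.ofReal_toReal (hI0top k)]
          exact ENNReal.ofReal_le_ofReal (by rw [← hB0 k]; exact hconfB k hk)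
  -- lower bound for kA
  have hsub : ∫⁻ w, (D w - E w) = 1 - ENNReal.ofReal q := by
    rw [lintegral_sub hE (by rw [hintE]; exact ENNReal.ofReal_ne_top)
      (Filter.Eventually.of_forall hEleD), hintD, hintE]
  have hsplit : (∫⁻ z, ENNReal.ofReal (h (φ x z) kA) ∂P)
      ≤ (∫⁻ w, E w * ENNReal.ofReal (h (φ x w) kA)) + (1 - ENNReal.ofReal q) := by
    have e1 : (∫⁻ z, ENNReal.ofReal (h (φ x z) kA) ∂P)
        = (∫⁻ w, E w * ENNReal.ofReal (h (φ x w) kA))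
          + ∫⁻ w, (D w - E w) * ENNReal.ofReal (h (φ x w) kA) := by
      rw [hrep _ (hfm kA), ← lintegral_add_left (f := fun w => E w * ENNReal.ofReal (h (φ x w) kA)) (hE.mul (hfm kA))]
      refine lintegral_congr fun w => ?_
      rw [← add_mul, add_tsub_cancel_of_le (hEleD w)]
    rw [e1]
    refine add_le_add_right ?_ _
    calc (∫⁻ w, (D w - E w) * ENNReal.ofReal (h (φ x w) kA))
        ≤ ∫⁻ w, (D w - E w) := lintegral_mono fun w => by
          calc (D w - E w) * ENNReal.ofReal (h (φ x w) kA) ≤ (D w - E w) * 1 :=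
                mul_le_mul_right (ENNReal.ofReal_le_one.mpr (hhb _ _).2) _
            _ = D w - E w := mul_one _
      _ = 1 - ENNReal.ofReal q := hsub
  have hIA : ENNReal.ofReal pA ≤ (∫⁻ z, ENNReal.ofReal (h (φ x z) kA) ∂P) := by
    rw [← ENNReal.ofReal_toReal (hI0top kA)]
    exact ENNReal.ofReal_le_ofReal (by rw [← hB0 kA]; exact hconfA)
  have hJA : ENNReal.ofReal (pA - (1 - q)) ≤ ∫⁻ w, E w * ENNReal.ofReal (h (φ x w) kA) := by
    have h1 : ENNReal.ofReal pA - (1 - ENNReal.ofReal q)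
        ≤ ∫⁻ w, E w * ENNReal.ofReal (h (φ x w) kA) :=
      tsub_le_iff_right.mpr (le_trans hIA hsplit)
    have h2 : (1 : ENNReal) - ENNReal.ofReal q = ENNReal.ofReal (1 - q) := by
      rw [← ENNReal.ofReal_one, ← ENNReal.ofReal_sub _ hqpos.le]
    have h3 : ENNReal.ofReal pA - ENNReal.ofReal (1 - q) = ENNReal.ofReal (pA - (1 - q)) :=
      (ENNReal.ofReal_sub _ (by linarith)).symm
    rw [h2, h3] at h1
    exact h1
  -- strict inequality of the J's
  have hJJ : (∫⁻ w, E w * ENNReal.ofReal (h (φ x w) k))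
      < ∫⁻ w, E w * ENNReal.ofReal (h (φ x w) kA) := by
    refine lt_of_le_of_lt hJk (lt_of_lt_of_le ?_ hJA)
    exact (ENNReal.ofReal_lt_ofReal_iff (by linarith)).mpr hkey
  -- conclude
  have hlt : (∫⁻ z, ENNReal.ofReal (h (φ x (α + z)) k) ∂P)
      < ∫⁻ z, ENNReal.ofReal (h (φ x (α + z)) kA) ∂P := by
    rw [hshift k, hshift kA]
    exact (ENNReal.mul_lt_mul_iff_right hR0 hRtop).mpr hJJ
  have htopk : ∀ k', (∫⁻ z, ENNReal.ofReal (h (φ x (α + z)) k') ∂P) ≠ ⊤ := by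
    intro k'
    rw [hshift k']
    exact ENNReal.mul_ne_top hRtop (lt_of_le_of_lt (hJle1 k') ENNReal.one_lt_top).ne
  rw [hB1 k, hB1 kA]
  exact (ENNReal.toReal_lt_toReal (htopk k) (htopk kA)).mpr hlt
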